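/- Let P ∈ ℝ^{n×n} be a row-substochastic nonnegative matrix with all row sums ≤ γ, and let T : ℝⁿ → ℝⁿ be defined by T U = P U + r for a fixed vector r. Let U* be a fixed point of T (assumed to exist), β_k = 1/(∑_{i=0}^k γ^{-2i}), and U^k = β_k U^0 + (1-β_k) T U^{k-1}. Then T U^k - U^k = ∑_{i=1}^k (β_i - β_{i-1}(1-β_i)) (∏_{j=i+1}^k (1-β_j)) P^{k-i+1}(U^0 - U*) - β_k (U^0 - U*) + (∏_{j=1}^k (1-β_j)) P^{k+1}(U^0 - U*), where empty products equal 1 and β_0 = 1. -/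

import Mathlib

private lemma stmt7_aux (n : ℕ) (P : Matrix (Fin n) (Fin n) ℝ) (E : Fin n → ℝ)
    (β : ℕ → ℝ) (hβ0 : β 0 = 1) (D : ℕ → Fin n → ℝ)
    (h0 : D 0 = P.mulVec E - E)
    (hrec : ∀ k, D (k+1) = β (k+1) • (P.mulVec E - E) + (1 - β (k+1)) • P.mulVec (D k)) :
    ∀ k : ℕ,
      D k = (∑ i ∈ Finset.Icc 1 k,
            ((β i - β (i-1) * (1 - β i)) * (∏ j ∈ Finset.Icc (i+1) k, (1 - β j)))
              • (P^(k-i+1)).mulVec E)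
          - β k • E
          + (∏ j ∈ Finset.Icc 1 k, (1 - β j)) • (P^(k+1)).mulVec E := by
  have hsum : ∀ (s : Finset ℕ) (f : ℕ → Fin n → ℝ),
      P.mulVec (∑ i ∈ s, f i) = ∑ i ∈ s, P.mulVec (f i) := by
    intro s f
    simp only [← Matrix.mulVecLin_apply]
    exact map_sum P.mulVecLin f s
  intro k
  induction k with
  | zero =>
    simp [h0, hβ0]
    abel
  | succ k ih =>
    have hempty : Finset.Icc (k+1+1) (k+1) = ∅ := Finset.Icc_eq_empty (by omega)
    have hRsum : (∑ i ∈ Finset.Icc 1 (k+1),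
          ((β i - β (i-1) * (1 - β i)) * (∏ j ∈ Finset.Icc (i+1) (k+1), (1 - β j)))
            • (P^(k+1-i+1)).mulVec E)
        = (1 - β (k+1)) • (∑ i ∈ Finset.Icc 1 k,
            ((β i - β (i-1) * (1 - β i)) * (∏ j ∈ Finset.Icc (i+1) k, (1 - β j)))
              • (P^(k-i+1+1)).mulVec E)
          + (β (k+1) - β k * (1 - β (k+1))) • P.mulVec E := by
      rw [Finset.sum_Icc_succ_top (by omega), Finset.smul_sum]
      congr 1
      · apply Finset.sum_congr rfl
        intro i hi
        have hik : i ≤ k := (Finset.mem_Icc.mp hi).2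
        have he : k + 1 - i + 1 = k - i + 1 + 1 := by omega
        rw [he, Finset.prod_Icc_succ_top (by omega), smul_smul]
        congr 1
        ring
      · rw [hempty]
        simp
    have hRprod : (∏ j ∈ Finset.Icc 1 (k+1), (1 - β j))
        = (∏ j ∈ Finset.Icc 1 k, (1 - β j)) * (1 - β (k+1)) :=
      Finset.prod_Icc_succ_top (by omega) _
    rw [hrec k, ih, hRsum, hRprod]
    simp only [Matrix.mulVec_add, Matrix.mulVec_sub, Matrix.mulVec_smul, hsum,
      Matrix.mulVec_mulVec, ← pow_succ']
    module

theorem stmt_7 (n : ℕ) (hn : 0 < n) (γ : ℝ) (hγ0 : 0 < γ) (hγ1 : γ ≤ 1)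
    (P : Matrix (Fin n) (Fin n) ℝ)
    (hPnonneg : ∀ i j, 0 ≤ P i j)
    (hProw : ∀ i, ∑ j, P i j ≤ γ)
    (r : Fin n → ℝ)
    (T : (Fin n → ℝ) → (Fin n → ℝ))
    (hTdef : ∀ U, T U = P.mulVec U + r)
    (Ustar : Fin n → ℝ) (hfix : T Ustar = Ustar)
    (β : ℕ → ℝ) (hβ : ∀ k, β k = (∑ i ∈ Finset.range (k+1), (γ^(2*i))⁻¹)⁻¹)
    (U : ℕ → Fin n → ℝ)
    (hU : ∀ k : ℕ, U (k+1) = β (k+1) • U 0 + (1 - β (k+1)) • T (U k)) :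
    ∀ k : ℕ,
      T (U k) - U k
        = (∑ i ∈ Finset.Icc 1 k,
            ((β i - β (i-1) * (1 - β i)) * (∏ j ∈ Finset.Icc (i+1) k, (1 - β j)))
              • (P^(k-i+1)).mulVec (U 0 - Ustar))
          - β k • (U 0 - Ustar)
          + (∏ j ∈ Finset.Icc 1 k, (1 - β j)) • (P^(k+1)).mulVec (U 0 - Ustar) := by
  have hβ0 : β 0 = 1 := by simp [hβ]
  have hr : r = Ustar - P.mulVec Ustar := by
    have h := hfix
    rw [hTdef] at h
    exact eq_sub_of_add_eq' h
  have h0 : T (U 0) - U 0 = P.mulVec (U 0 - Ustar) - (U 0 - Ustar) := by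
    rw [hTdef, hr, Matrix.mulVec_sub]
    abel
  have hrec : ∀ k, T (U (k+1)) - U (k+1)
      = β (k+1) • (P.mulVec (U 0 - Ustar) - (U 0 - Ustar))
        + (1 - β (k+1)) • P.mulVec (T (U k) - U k) := by
    intro k
    rw [hU k, hTdef, hTdef, hr]
    simp only [Matrix.mulVec_add, Matrix.mulVec_sub, Matrix.mulVec_smul]
    module
  exact stmt7_aux n P (U 0 - Ustar) β hβ0 (fun k => T (U k) - U k) h0 hrec
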